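/- Let S be a finite set of points in a pseudometric space with distance d, and let σ be a cyclic permutation of S with tour cost C = ∑_{v ∈ S} d(v, σ(v)). Then for any two points u, v ∈ S one has d(u,v) ≤ C/2. -/

import Mathlib

open Function Finset

private lemma tele {α β : Type*} [PseudoMetricSpace α] (f : β → β) (φ : β → α) (x : β) :
    ∀ n : ℕ, dist (φ x) (φ (f^[n] x)) ≤ ∑ i ∈ range n, dist (φ (f^[i] x)) (φ (f^[i+1] x)) := by
  intro n
  induction n with
  | zero => simp
  | succ n ih =>
      rw [Finset.sum_range_succ]
      calc dist (φ x) (φ (f^[n+1] x)) ≤ dist (φ x) (φ (f^[n] x)) + dist (φ (f^[n] x)) (φ (f^[n+1] x)) := dist_triangle _ _ _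
      _ ≤ _ := by linarith

/-- A permutation is cyclic (a single cycle through all elements) iff its
iterates act transitively. -/
def IsCyclicPerm {β : Type*} (σ : Equiv.Perm β) : Prop :=
  ∀ x y : β, ∃ n : ℕ, (σ ^ n) x = y

/-- If `σ` is a cyclic permutation (tour) of a finite set `S` of points of a
pseudometric space, with tour cost `C = ∑_{v ∈ S} d(v, σ v)`, then any two
points `u v ∈ S` satisfy `d(u,v) ≤ C / 2`. -/
theorem dist_le_half_tour_cost {α : Type*} [PseudoMetricSpace α]
    (S : Finset α) (σ : Equiv.Perm {x // x ∈ S}) (hσ : IsCyclicPerm σ)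
    (C : ℝ) (hC : C = ∑ v : {x // x ∈ S}, dist (v : α) (σ v : α)) :
    ∀ u ∈ S, ∀ v ∈ S, dist u v ≤ C / 2 := by
  intro u hu v hv
  set f : {x // x ∈ S} → {x // x ∈ S} := ⇑σ with hf
  set φ : {x // x ∈ S} → α := Subtype.val with hφ
  set u' : {x // x ∈ S} := ⟨u, hu⟩
  set v' : {x // x ∈ S} := ⟨v, hv⟩
  have hper : u' ∈ Function.periodicPts f := by
    refine ⟨orderOf σ, orderOf_pos σ, ?_⟩
    show f^[orderOf σ] u' = u'
    rw [hf, Equiv.Perm.iterate_eq_pow, pow_orderOf_eq_one]; rfl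
  set p : ℕ := Function.minimalPeriod f u' with hp
  have hp0 : 0 < p := Function.minimalPeriod_pos_of_mem_periodicPts hper
  have hfp : f^[p] u' = u' := Function.isPeriodicPt_minimalPeriod f u'
  have hsurj : ∀ y : {x // x ∈ S}, ∃ i < p, f^[i] u' = y := by
    intro y
    obtain ⟨n, hn⟩ := hσ u' y
    refine ⟨n % p, Nat.mod_lt _ hp0, ?_⟩
    rw [hp, Function.iterate_mod_minimalPeriod_eq]
    rw [hf, Equiv.Perm.iterate_eq_pow]; exact hn
  have hCeq : C = ∑ i ∈ range p, dist (φ (f^[i] u')) (φ (f^[i+1] u')) := by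
    rw [hC]
    refine (Finset.sum_bij (fun i _ => f^[i] u') (fun i _ => Finset.mem_univ _) ?_ ?_ ?_).symm
    · intro a ha b hb hab
      exact Function.iterate_injOn_Iio_minimalPeriod (Finset.mem_range.mp ha)
        (Finset.mem_range.mp hb) hab
    · intro y _
      obtain ⟨i, hi, hiy⟩ := hsurj y
      exact ⟨i, Finset.mem_range.mpr hi, hiy⟩
    · intro i _
      rw [Function.iterate_succ_apply']
  obtain ⟨m, hm, hmv⟩ := hsurj v'
  have harc1 : dist u v ≤ ∑ i ∈ range m, dist (φ (f^[i] u')) (φ (f^[i+1] u')) := by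
    have := tele f φ u' m
    rwa [hmv] at this
  have key : f^[p - m] (f^[m] u') = u' := by
    rw [← Function.iterate_add_apply, Nat.sub_add_cancel hm.le, hfp]
  have harc2 : dist v u ≤ ∑ i ∈ Finset.Ico m p, dist (φ (f^[i] u')) (φ (f^[i+1] u')) := by
    have h := tele f φ (f^[m] u') (p - m)
    calc dist v u = dist (φ (f^[m] u')) (φ (f^[p - m] (f^[m] u'))) := by rw [key, hmv]
      _ ≤ ∑ i ∈ range (p - m), dist (φ (f^[i] (f^[m] u'))) (φ (f^[i+1] (f^[m] u'))) := h
      _ = ∑ i ∈ Finset.Ico m p, dist (φ (f^[i] u')) (φ (f^[i+1] u')) := by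
          rw [Finset.sum_Ico_eq_sum_range]
          apply Finset.sum_congr rfl
          intro i _
          rw [← Function.iterate_add_apply, ← Function.iterate_add_apply]
          ring_nf
  have hsplit : ∑ i ∈ range m, dist (φ (f^[i] u')) (φ (f^[i+1] u'))
      + ∑ i ∈ Finset.Ico m p, dist (φ (f^[i] u')) (φ (f^[i+1] u')) = C := by
    rw [hCeq, Finset.range_eq_Ico,
      Finset.sum_Ico_consecutive _ (Nat.zero_le m) hm.le, Finset.range_eq_Ico]
  have := dist_comm u v
  linarith
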